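/- Let q be a prime, d = π(q-1), x_0 ∈ F_q, and N_q = #{v ∈ F_q^d : L_n(v) ≠ x_0 for all n ∈ {1,...,q-1}}, where L_n is the linear form given by the exponent vector of n. Then N_q ≤ q^d − M·q^{d-1} + (M choose 2)·q^{d-2}, where M is the number of square-free integers in {2,...,q-1}. -/

import Mathlib

open Finset

private lemma fiber_card_mul {V W : Type*} [AddCommGroup V] [AddCommGroup W]
    (f : V →+ W) (s : W → V) (hs : ∀ t, f (s t) = t) (w : W) :
    Nat.card {v : V // f v = w} * Nat.card W = Nat.card V := by
  have E : V ≃ {v : V // f v = 0} × W :=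
    { toFun := fun v => (⟨v - s (f v), by simp [map_sub, hs]⟩, f v)
      invFun := fun p => p.1.1 + s p.2
      left_inv := fun v => by simp
      right_inv := fun p => by
        obtain ⟨⟨u, hu⟩, t⟩ := p
        have h1 : f (u + s t) = t := by simp [map_add, hs, hu]
        simp [h1] }
  have Ew : {v : V // f v = w} ≃ {v : V // f v = 0} :=
    { toFun := fun v => ⟨v.1 - s w, by simp [map_sub, hs, v.2]⟩
      invFun := fun u => ⟨u.1 + s w, by simp [map_add, hs, u.2]⟩
      left_inv := fun v => Subtype.ext (by simp)
      right_inv := fun u => Subtype.ext (by simp) }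
  calc Nat.card {v : V // f v = w} * Nat.card W
      = Nat.card {v : V // f v = 0} * Nat.card W := by rw [Nat.card_congr Ew]
    _ = Nat.card ({v : V // f v = 0} × W) := (Nat.card_prod _ _).symm
    _ = Nat.card V := (Nat.card_congr E).symm

private def linForm {q d : ℕ} (c : Fin d → ZMod q) : (Fin d → ZMod q) →+ ZMod q :=
  AddMonoidHom.mk' (fun v => ∑ i, c i * v i)
    (fun a b => by simp [mul_add, Finset.sum_add_distrib])

private lemma card_zmod_fun (q d : ℕ) (hq : q.Prime) :
    Nat.card (Fin d → ZMod q) = q ^ d := by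
  haveI : Fact q.Prime := ⟨hq⟩
  rw [Nat.card_eq_fintype_card, Fintype.card_fun, ZMod.card, Fintype.card_fin]

private lemma count_one_form (q d : ℕ) (hq : q.Prime) (c : Fin d → ZMod q) (x₀ : ZMod q)
    (j : Fin d) (hj : c j = 1) :
    Nat.card {v : Fin d → ZMod q // ∑ i, c i * v i = x₀} = q ^ (d - 1) := by
  haveI : Fact q.Prime := ⟨hq⟩
  have hs : ∀ t : ZMod q, linForm c (fun i => if i = j then t else 0) = t := by
    intro t
    show ∑ i, c i * (if i = j then t else 0) = t
    simp [mul_ite, Finset.sum_ite_eq', hj]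
  have key := fiber_card_mul (linForm c) _ hs x₀
  rw [Nat.card_zmod, card_zmod_fun q d hq] at key
  have hd1 : 1 ≤ d := Nat.pos_of_ne_zero (by rintro rfl; exact j.elim0)
  have hqd : q ^ d = q ^ (d - 1) * q := by
    rw [← pow_succ]
    congr 1
    omega
  rw [hqd] at key
  have := Nat.eq_of_mul_eq_mul_right hq.pos key
  exact this

private def sect {q d : ℕ} (c : Fin d → ZMod q) (j k : Fin d)
    (p : ZMod q × ZMod q) : Fin d → ZMod q :=
  fun i => if i = k then p.2 else if i = j then p.1 - c k * p.2 else 0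

private lemma linForm_sect {q d : ℕ} (c cc : Fin d → ZMod q) (j k : Fin d) (hjk : j ≠ k)
    (p : ZMod q × ZMod q) :
    linForm cc (sect c j k p) = cc k * p.2 + cc j * (p.1 - c k * p.2) := by
  show ∑ i, cc i * sect c j k p i = _
  have hkj : k ≠ j := Ne.symm hjk
  have hpt : ∀ i, cc i * sect c j k p i =
      (if i = k then cc k * p.2 else 0) + (if i = j then cc j * (p.1 - c k * p.2) else 0) := by
    intro i
    rcases eq_or_ne i k with hik | hik
    · simp [sect, hik, hkj]
    · rcases eq_or_ne i j with hij | hij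
      · simp [sect, hij, hik, fun h : j = k => hjk h]
      · simp [sect, hik, hij]
  rw [Finset.sum_congr rfl (fun i _ => hpt i), Finset.sum_add_distrib]
  simp [Finset.sum_ite_eq']

private lemma count_two_forms (q d : ℕ) (hq : q.Prime) (c c' : Fin d → ZMod q) (x₀ : ZMod q)
    (j k : Fin d) (hjk : j ≠ k) (hj : c j = 1) (h'j : c' j = 0) (h'k : c' k = 1) :
    Nat.card {v : Fin d → ZMod q // (∑ i, c i * v i = x₀) ∧ (∑ i, c' i * v i = x₀)}
      = q ^ (d - 2) := by
  haveI : Fact q.Prime := ⟨hq⟩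
  set f : (Fin d → ZMod q) →+ (ZMod q × ZMod q) := (linForm c).prod (linForm c') with hf
  clear_value f
  have hs : ∀ p : ZMod q × ZMod q, f (sect c j k p) = p := by
    intro p
    have h1 : linForm c (sect c j k p) = p.1 := by
      rw [linForm_sect c c j k hjk p, hj]; ring
    have h2 : linForm c' (sect c j k p) = p.2 := by
      rw [linForm_sect c c' j k hjk p, h'j, h'k]; ring
    simp [hf, AddMonoidHom.prod_apply, h1, h2]
  have key := fiber_card_mul f (sect c j k) hs (x₀, x₀)
  have hcw : Nat.card (ZMod q × ZMod q) = q * q := by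
    rw [Nat.card_prod, Nat.card_zmod]
  rw [hcw, card_zmod_fun q d hq] at key
  have hcong : Nat.card {v : Fin d → ZMod q // (∑ i, c i * v i = x₀) ∧ (∑ i, c' i * v i = x₀)}
      = Nat.card {v : Fin d → ZMod q // f v = (x₀, x₀)} := by
    apply Nat.card_congr
    apply Equiv.subtypeEquivRight
    intro v
    simp [hf, AddMonoidHom.prod_apply, linForm, Prod.ext_iff]
  have hd2 : 2 ≤ d := by
    have hnt : Nontrivial (Fin d) := ⟨⟨j, k, hjk⟩⟩
    have h := Fintype.one_lt_card_iff_nontrivial.mpr hnt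
    rwa [Fintype.card_fin] at h
  have hqd : q ^ d = q ^ (d - 2) * (q * q) := by
    calc q ^ d = q ^ (d - 2 + 2) := by rw [Nat.sub_add_cancel hd2]
      _ = q ^ (d - 2) * (q * q) := by ring
  rw [hqd] at key
  rw [hcong]
  exact Nat.eq_of_mul_eq_mul_right (Nat.mul_pos hq.pos hq.pos) key

private lemma count_lt_count (q : ℕ) {p : ℕ} (hp : p.Prime) (hpq : p < q) :
    Nat.count Nat.Prime p < Nat.count Nat.Prime q := by
  have h1 : Nat.count Nat.Prime (p + 1) = Nat.count Nat.Prime p + 1 := by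
    simp [Nat.count_succ, hp]
  have h2 := Nat.count_monotone Nat.Prime (show p + 1 ≤ q from hpq)
  omega

theorem Nq_upper_bound (q : ℕ) (hq : q.Prime)
    (d : ℕ) (hd : d = ((Finset.range q).filter Nat.Prime).card)
    (L : ℕ → (Fin d → ZMod q) → ZMod q)
    (hL : ∀ n v, L n v = ∑ i : Fin d,
      ((Nat.factorization n (Nat.nth Nat.Prime i) : ZMod q) * v i))
    (x₀ : ZMod q)
    (Nq : ℕ)
    (hNq : Nq = Nat.card {v : Fin d → ZMod q // ∀ n ∈ Finset.Icc 1 (q - 1), L n v ≠ x₀})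
    (M : ℕ) (hM : M = ((Finset.Icc 2 (q - 1)).filter Squarefree).card) :
    Nq ≤ q ^ d - M * q ^ (d - 1) + M.choose 2 * q ^ (d - 2) := by
  classical
  haveI : Fact q.Prime := ⟨hq⟩
  have hq2 : 2 ≤ q := hq.two_le
  have hd' : Nat.count Nat.Prime q = d := by
    rw [hd, Nat.count_eq_card_filter_range]
  -- index for each prime below q
  have hidx : ∀ p : ℕ, p.Prime → p < q → ∃ j : Fin d, Nat.nth Nat.Prime (j : ℕ) = p := by
    intro p hp hpq
    refine ⟨⟨Nat.count Nat.Prime p, hd' ▸ count_lt_count q hp hpq⟩, ?_⟩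
    exact Nat.nth_count hp
  set S := (Finset.Icc 2 (q - 1)).filter Squarefree with hS
  have hSmem : ∀ n ∈ S, 2 ≤ n ∧ n ≤ q - 1 ∧ Squarefree n := by
    intro n hn
    rw [hS, Finset.mem_filter, Finset.mem_Icc] at hn
    exact ⟨hn.1.1, hn.1.2, hn.2⟩
  set c : ℕ → Fin d → ZMod q :=
    fun n i => ((Nat.factorization n (Nat.nth Nat.Prime i) : ℕ) : ZMod q) with hc
  have hLc : ∀ n v, L n v = ∑ i, c n i * v i := by
    intro n v; rw [hL]
  set A : ℕ → Finset (Fin d → ZMod q) :=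
    fun n => Finset.univ.filter (fun v => L n v = x₀) with hA
  -- pivot for a single squarefree n
  have hpivot : ∀ n ∈ S, ∀ p : ℕ, p.Prime → p ∣ n →
      ∃ j : Fin d, c n j = 1 ∧ Nat.nth Nat.Prime (j : ℕ) = p := by
    intro n hn p hp hdvd
    obtain ⟨h2n, hnq, hsf⟩ := hSmem n hn
    have hn0 : n ≠ 0 := by omega
    have hpq : p < q := by
      have := Nat.le_of_dvd (by omega) hdvd
      omega
    obtain ⟨j, hj⟩ := hidx p hp hpq
    have hfact : Nat.factorization n p = 1 :=
      le_antisymm (Squarefree.natFactorization_le_one p hsf)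
        (hp.factorization_pos_of_dvd hn0 hdvd)
    refine ⟨j, ?_, hj⟩
    rw [hc]
    simp [hj, hfact]
  -- card of A n
  have hcardA : ∀ n ∈ S, (A n).card = q ^ (d - 1) := by
    intro n hn
    obtain ⟨h2n, hnq, hsf⟩ := hSmem n hn
    have hmf := Nat.minFac_prime (show n ≠ 1 by omega)
    obtain ⟨j, hj1, _⟩ := hpivot n hn n.minFac hmf (Nat.minFac_dvd n)
    have : (A n).card = Nat.card {v : Fin d → ZMod q // ∑ i, c n i * v i = x₀} := by
      rw [Nat.card_eq_fintype_card, Fintype.card_subtype, hA]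
      congr 1
      ext v
      simp [hLc]
    rw [this]
    exact count_one_form q d hq (c n) x₀ j hj1
  -- card of pairwise intersections, ordered version
  have hpair : ∀ m ∈ S, ∀ n ∈ S, ∀ p : ℕ,
      Nat.factorization m p = 1 → Nat.factorization n p = 0 →
      (A m ∩ A n).card = q ^ (d - 2) := by
    intro m hm n hn p hfm hfn
    obtain ⟨h2m, hmq, hsfm⟩ := hSmem m hm
    obtain ⟨h2n, hnq, hsfn⟩ := hSmem n hn
    have hm0 : m ≠ 0 := by omega
    have hp : p.Prime := by
      have : p ∈ m.primeFactors := by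
        rw [← Nat.support_factorization, Finsupp.mem_support_iff, hfm]
        exact one_ne_zero
      exact Nat.prime_of_mem_primeFactors this
    have hpdvd : p ∣ m := by
      rw [Nat.Prime.dvd_iff_one_le_factorization hp hm0, hfm]
    obtain ⟨j, hj1, hjp⟩ := hpivot m hm p hp hpdvd
    have hmfn := Nat.minFac_prime (show n ≠ 1 by omega)
    obtain ⟨k, hk1, hkp⟩ := hpivot n hn n.minFac hmfn (Nat.minFac_dvd n)
    have hjk : j ≠ k := by
      intro h
      have : p = n.minFac := by rw [← hjp, ← hkp, h]
      have hfn1 : Nat.factorization n n.minFac = 1 :=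
        le_antisymm (Squarefree.natFactorization_le_one _ hsfn)
          (hmfn.factorization_pos_of_dvd (by omega) (Nat.minFac_dvd n))
      rw [this, hfn1] at hfn
      exact one_ne_zero hfn
    have hcnj : c n j = 0 := by
      rw [hc]
      simp [hjp, hfn]
    have : (A m ∩ A n).card =
        Nat.card {v : Fin d → ZMod q // (∑ i, c m i * v i = x₀) ∧ (∑ i, c n i * v i = x₀)} := by
      rw [Nat.card_eq_fintype_card, Fintype.card_subtype]
      congr 1
      ext v
      simp [hA, hLc]
    rw [this]
    exact count_two_forms q d hq (c m) (c n) x₀ j k hjk hj1 hcnj hk1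
  have hcardAA : ∀ pr ∈ S.offDiag, (A pr.1 ∩ A pr.2).card = q ^ (d - 2) := by
    rintro ⟨m, n⟩ hmn
    rw [Finset.mem_offDiag] at hmn
    obtain ⟨hm, hn, hne⟩ := hmn
    obtain ⟨h2m, hmq, hsfm⟩ := hSmem m hm
    obtain ⟨h2n, hnq, hsfn⟩ := hSmem n hn
    have hfne : m.factorization ≠ n.factorization := by
      intro h
      exact hne (Nat.factorization_inj (show m ∈ {x : ℕ | x ≠ 0} by simp; omega)
        (show n ∈ {x : ℕ | x ≠ 0} by simp; omega) h)
    obtain ⟨p, hp⟩ := Finsupp.ne_iff.mp hfne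
    have h1 : Nat.factorization m p ≤ 1 := Squarefree.natFactorization_le_one p hsfm
    have h2 : Nat.factorization n p ≤ 1 := Squarefree.natFactorization_le_one p hsfn
    rcases (show (Nat.factorization m p = 1 ∧ Nat.factorization n p = 0) ∨
        (Nat.factorization n p = 1 ∧ Nat.factorization m p = 0) by omega) with ⟨ha, hb⟩ | ⟨ha, hb⟩
    · exact hpair m hm n hn p ha hb
    · rw [Finset.inter_comm]
      exact hpair n hn m hm p ha hb
  -- Bonferroni
  set U := S.biUnion A with hU
  set t : (Fin d → ZMod q) → ℕ := fun x => (S.filter (fun n => x ∈ A n)).card with ht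
  have hsub : ∀ n ∈ S, A n ⊆ U := fun n hn => Finset.subset_biUnion_of_mem A hn
  have step1 : ∑ n ∈ S, (A n).card = ∑ x ∈ U, t x := by
    have hAf : ∀ n ∈ S, (A n).card = ∑ x ∈ U, if x ∈ A n then 1 else 0 := by
      intro n hn
      rw [← Finset.card_filter]
      congr 1
      ext x
      simp only [Finset.mem_filter]
      exact ⟨fun h => ⟨hsub n hn h, h⟩, fun h => h.2⟩
    rw [Finset.sum_congr rfl hAf, Finset.sum_comm]
    exact Finset.sum_congr rfl (fun x _ => (Finset.card_filter _ _).symm)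
  have step2 : ∑ x ∈ U, (t x * t x - t x) ≤ ∑ pr ∈ S.offDiag, (A pr.1 ∩ A pr.2).card := by
    have e1 : ∀ x ∈ U, t x * t x - t x =
        ((S.offDiag).filter (fun pr => x ∈ A pr.1 ∧ x ∈ A pr.2)).card := by
      intro x _
      have heq : (S.filter (fun n => x ∈ A n)).offDiag =
          (S.offDiag).filter (fun pr => x ∈ A pr.1 ∧ x ∈ A pr.2) := by
        ext ⟨a, b⟩
        simp only [Finset.mem_offDiag, Finset.mem_filter]
        tauto
      rw [ht]
      simp only
      rw [← Finset.offDiag_card, heq]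
    rw [Finset.sum_congr rfl e1,
      Finset.sum_congr rfl (fun x _ => Finset.card_filter _ _), Finset.sum_comm]
    apply Finset.sum_le_sum
    intro pr hpr
    rw [← Finset.card_filter]
    apply Finset.card_le_card
    intro x hx
    simp only [Finset.mem_filter] at hx
    exact Finset.mem_inter.mpr ⟨hx.2.1, hx.2.2⟩
  have step3 : ∀ x ∈ U, 1 ≤ t x := by
    intro x hx
    obtain ⟨n, hn, hxn⟩ := Finset.mem_biUnion.mp hx
    rw [ht]
    exact Finset.card_pos.mpr ⟨n, Finset.mem_filter.mpr ⟨hn, hxn⟩⟩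
  have key : 2 * ∑ n ∈ S, (A n).card
      ≤ 2 * U.card + ∑ pr ∈ S.offDiag, (A pr.1 ∩ A pr.2).card := by
    calc 2 * ∑ n ∈ S, (A n).card = ∑ x ∈ U, 2 * t x := by
          rw [step1, Finset.mul_sum]
      _ ≤ ∑ x ∈ U, (2 + (t x * t x - t x)) := by
          apply Finset.sum_le_sum
          intro x hx
          have h1 := step3 x hx
          obtain ⟨s, hs⟩ : ∃ s, t x = s + 1 := ⟨t x - 1, by omega⟩
          rw [hs]
          have h2 : (s + 1) * (s + 1) = (s + 1) * s + (s + 1) := by ring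
          rw [h2, Nat.add_sub_cancel]
          have hss : s ≤ s * s := by
            rcases Nat.eq_zero_or_pos s with rfl | hs0
            · simp
            · exact Nat.le_mul_of_pos_left s hs0
          have hexp : (s + 1) * s = s * s + s := by ring
          linarith
      _ = 2 * U.card + ∑ x ∈ U, (t x * t x - t x) := by
          rw [Finset.sum_add_distrib, Finset.sum_const, smul_eq_mul, mul_comm]
      _ ≤ 2 * U.card + ∑ pr ∈ S.offDiag, (A pr.1 ∩ A pr.2).card :=
          Nat.add_le_add_left step2 _
  -- compute totals
  have hsum1 : ∑ n ∈ S, (A n).card = M * q ^ (d - 1) := by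
    rw [Finset.sum_congr rfl hcardA, Finset.sum_const, smul_eq_mul, hM, hS]
  have hsum2 : ∑ pr ∈ S.offDiag, (A pr.1 ∩ A pr.2).card
      = 2 * (M.choose 2 * q ^ (d - 2)) := by
    rw [Finset.sum_congr rfl hcardAA, Finset.sum_const, smul_eq_mul, Finset.offDiag_card]
    have hMcard : S.card = M := by rw [hM, hS]
    rw [hMcard]
    have hMM : M * M - M = 2 * M.choose 2 := by
      rcases M with _ | m
      · simp
      · rw [Nat.choose_two_right]
        have h2 : (m + 1) * (m + 1) - (m + 1) = (m + 1) * m := by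
          have : (m + 1) * (m + 1) = (m + 1) * m + (m + 1) := by ring
          rw [this, Nat.add_sub_cancel]
        rw [h2]
        have heven : 2 ∣ (m + 1) * m := by
          have := Nat.even_mul_succ_self m
          rw [mul_comm] at this
          exact this.two_dvd
        simp only [Nat.add_sub_cancel]
        rw [Nat.mul_div_cancel' heven]
    rw [hMM, mul_assoc]
  -- disjointness and total count
  set N := Finset.univ.filter
    (fun v : Fin d → ZMod q => ∀ n ∈ Finset.Icc 1 (q - 1), L n v ≠ x₀) with hN
  have hNqN : Nq = N.card := by
    rw [hNq, Nat.card_eq_fintype_card, Fintype.card_subtype]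
    congr 1
    ext v
    simp [hN]
  have hdisj : Disjoint N U := by
    rw [Finset.disjoint_left]
    intro x hxN hxU
    obtain ⟨n, hn, hxn⟩ := Finset.mem_biUnion.mp hxU
    obtain ⟨h2n, hnq, _⟩ := hSmem n hn
    simp only [hN, Finset.mem_filter] at hxN
    simp only [hA, Finset.mem_filter] at hxn
    exact hxN.2 n (Finset.mem_Icc.mpr ⟨by omega, hnq⟩) hxn.2
  have htotal : N.card + U.card ≤ q ^ d := by
    rw [← Finset.card_union_of_disjoint hdisj]
    calc (N ∪ U).card ≤ Fintype.card (Fin d → ZMod q) := Finset.card_le_univ _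
      _ = q ^ d := by rw [Fintype.card_fun, ZMod.card, Fintype.card_fin]
  -- finish
  have h1 : Nq + U.card ≤ q ^ d := by rw [hNqN]; exact htotal
  have h2 : 2 * (M * q ^ (d - 1)) ≤ 2 * U.card + 2 * (M.choose 2 * q ^ (d - 2)) := by
    rw [← hsum1, ← hsum2]
    exact key
  have final : ∀ P a b u n : ℕ, n + u ≤ P → 2 * a ≤ 2 * u + 2 * b → n ≤ P - a + b := by
    intros
    omega
  exact final _ _ _ _ _ h1 h2
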